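/- Let u be a fully commutative element of W(A_n) with σ_n ∈ Supp(u). Then σ_n occurs exactly once in every reduced expression of u. -/

import Mathlib

open CoxeterSystem

def CommMove {B : Type*} (M : CoxeterMatrix B) (ω₁ ω₂ : List B) : Prop :=
  ∃ (l r : List B) (s t : B), M s t = 2 ∧ ω₁ = l ++ s :: t :: r ∧ ω₂ = l ++ t :: s :: r

def CommEquiv {B : Type*} (M : CoxeterMatrix B) : List B → List B → Prop :=
  Relation.ReflTransGen (CommMove M)

def IsRedexOf {B W : Type*} [Group W] {M : CoxeterMatrix B} (cs : CoxeterSystem M W)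
    (ω : List B) (w : W) : Prop :=
  cs.wordProd ω = w ∧ cs.IsReduced ω

def IsFC {B W : Type*} [Group W] {M : CoxeterMatrix B} (cs : CoxeterSystem M W) (w : W) : Prop :=
  ∀ ω₁ ω₂, IsRedexOf cs ω₁ w → IsRedexOf cs ω₂ w → CommEquiv M ω₁ ω₂

section Aux
variable {B : Type*} {W : Type*} [Group W] {M : CoxeterMatrix B} (cs : CoxeterSystem M W)

lemma simple_comm_of_M_eq_two {i j : B} (h : M i j = 2) :
    cs.simple i * cs.simple j = cs.simple j * cs.simple i := by
  have h1 := cs.simple_mul_simple_pow i j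
  rw [h, pow_two] at h1
  have : cs.simple i * cs.simple j = (cs.simple i * cs.simple j)⁻¹ :=
    eq_inv_of_mul_eq_one_left h1
  rw [this, mul_inv_rev, cs.inv_simple, cs.inv_simple]

lemma simple_braid_of_M_eq_three {i j : B} (h : M i j = 3) :
    cs.simple i * cs.simple j * cs.simple i = cs.simple j * cs.simple i * cs.simple j := by
  have h1 := cs.simple_mul_simple_pow i j
  rw [h, pow_succ, pow_two] at h1
  have h2 : (cs.simple i * cs.simple j * cs.simple i) *
      (cs.simple j * cs.simple i * cs.simple j) = 1 := by
    rw [← h1]; group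
  have : cs.simple i * cs.simple j * cs.simple i =
      (cs.simple j * cs.simple i * cs.simple j)⁻¹ := eq_inv_of_mul_eq_one_left h2
  rw [this]; simp [mul_inv_rev, cs.inv_simple, mul_assoc]

lemma commMove_perm {ω₁ ω₂ : List B} (h : CommMove M ω₁ ω₂) : ω₁.Perm ω₂ := by
  obtain ⟨l, r, s, t, -, rfl, rfl⟩ := h
  exact List.Perm.append_left l (List.Perm.swap t s r)

lemma commEquiv_perm {ω₁ ω₂ : List B} (h : CommEquiv M ω₁ ω₂) : ω₁.Perm ω₂ := by
  induction h with
  | refl => exact List.Perm.refl _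
  | tail _ h ih => exact ih.trans (commMove_perm h)

lemma simple_mul_wordProd_comm (k : B) :
    ∀ m : List B, (∀ x ∈ m, cs.simple x * cs.simple k = cs.simple k * cs.simple x) →
      cs.simple k * cs.wordProd m = cs.wordProd m * cs.simple k := by
  intro m
  induction m with
  | nil => simp
  | cons x m ih =>
    intro h
    rw [cs.wordProd_cons, ← mul_assoc, ← h x (by simp), mul_assoc,
      ih (fun y hy => h y (by simp [hy])), ← mul_assoc]

lemma exists_split_first {α : Type*} (p : α → Prop) [DecidablePred p] :
    ∀ (m : List α), (∃ x ∈ m, p x) →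
      ∃ m1 a m2, m = m1 ++ a :: m2 ∧ p a ∧ ∀ x ∈ m1, ¬ p x := by
  intro m
  induction m with
  | nil => simp
  | cons y m ih =>
    intro h
    by_cases hy : p y
    · exact ⟨[], y, m, rfl, hy, by simp⟩
    · obtain ⟨x, hx, hpx⟩ := h
      have hx' : x ∈ m := by
        rcases List.mem_cons.1 hx with rfl | h'
        · exact absurd hpx hy
        · exact h'
      obtain ⟨m1, a, m2, he, hpa, hm1⟩ := ih ⟨x, hx', hpx⟩
      refine ⟨y :: m1, a, m2, by simp [he], hpa, ?_⟩
      rintro z hz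
      rcases List.mem_cons.1 hz with rfl | hz'
      · exact hy
      · exact hm1 z hz'

end Aux

section An
variable {n : ℕ}

lemma An_eq_two {x k : Fin n} (h1 : (x : ℕ) < (k : ℕ)) (h2 : (x : ℕ) + 1 ≠ (k : ℕ)) :
    CoxeterMatrix.Aₙ n x k = 2 := by
  have hne : x ≠ k := fun h => by simp [h] at h1
  simp only [CoxeterMatrix.Aₙ, CoxeterMatrix.A, Matrix.of_apply]
  rw [if_neg hne, if_neg (by omega)]

lemma An_eq_three {x k : Fin n} (h : (x : ℕ) + 1 = (k : ℕ)) :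
    CoxeterMatrix.Aₙ n k x = 3 := by
  have hne : k ≠ x := fun he => by rw [he] at h; omega
  simp only [CoxeterMatrix.Aₙ, CoxeterMatrix.A, Matrix.of_apply]
  rw [if_neg hne, if_pos (Or.inl h)]

variable [NeZero n] {W : Type*} [Group W] (cs : CoxeterSystem (CoxeterMatrix.Aₙ n) W)

omit [NeZero n] in
lemma comm_simple_An {x k : Fin n} (h1 : (x : ℕ) < (k : ℕ)) (h2 : (x : ℕ) + 1 ≠ (k : ℕ)) :
    cs.simple x * cs.simple k = cs.simple k * cs.simple x :=
  simple_comm_of_M_eq_two cs (An_eq_two h1 h2)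

lemma no_bad_pair (u : W) (hu : IsFC cs u) :
    ∀ (L : ℕ) (k : Fin n) (l m r : List (Fin n)), m.length ≤ L →
      IsRedexOf cs (l ++ k :: m ++ k :: r) u → (∀ x ∈ m, (x : ℕ) < (k : ℕ)) → False := by
  intro L
  induction L using Nat.strong_induction_on with
  | _ L IH =>
  intro k l m r hlen hred hlt
  obtain ⟨hprod, hredu⟩ := hred
  by_cases hex : ∃ x ∈ m, (x : ℕ) + 1 = (k : ℕ)
  · obtain ⟨m1, j, m2, hm, hj, hm1⟩ := exists_split_first (fun x : Fin n => (x : ℕ) + 1 = (k : ℕ)) m hex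
    by_cases hex2 : ∃ x ∈ m2, (x : ℕ) + 1 = (k : ℕ)
    · obtain ⟨m3, j2, m4, hm2, hj2, hm3⟩ :=
        exists_split_first (fun x : Fin n => (x : ℕ) + 1 = (k : ℕ)) m2 hex2
      have hj2j : j2 = j := Fin.ext (by omega)
      have hm2' : m2 = m3 ++ j :: m4 := by rw [hm2, hj2j]
      have hmem3 : ∀ x ∈ m3, x ∈ m := by
        intro x hx; rw [hm, hm2']; simp [hx]
      have hLlt : m3.length < L := by
        have : m.length = m1.length + (m3.length + m4.length + 2) := by
          rw [hm, hm2']; simp; omega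
        omega
      refine IH m3.length hLlt j (l ++ k :: m1) m3 (m4 ++ k :: r) le_rfl ?_ ?_
      · have heq : l ++ k :: m ++ k :: r =
            (l ++ k :: m1) ++ j :: m3 ++ j :: (m4 ++ k :: r) := by
          rw [hm, hm2']; simp
        rw [heq] at hprod hredu
        exact ⟨hprod, hredu⟩
      · intro x hx
        have h1 := hlt x (hmem3 x hx)
        have h2 := hm3 x hx
        omega
    · -- braid case
      push_neg at hex2
      have hcomm1 : ∀ x ∈ m1, cs.simple x * cs.simple k = cs.simple k * cs.simple x := by
        intro x hx
        exact comm_simple_An cs (hlt x (by rw [hm]; simp [hx])) (hm1 x hx)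
      have hcomm2 : ∀ x ∈ m2, cs.simple x * cs.simple k = cs.simple k * cs.simple x := by
        intro x hx
        exact comm_simple_An cs (hlt x (by rw [hm]; simp [hx])) (hex2 x hx)
      have hjk : (j : ℕ) + 1 = (k : ℕ) := hj
      set ω := l ++ k :: m ++ k :: r with hω
      set ω' := l ++ m1 ++ j :: k :: j :: (m2 ++ r) with hω'
      have hπ : cs.wordProd ω = cs.wordProd ω' := by
        have e1 : cs.simple k * cs.wordProd m1 = cs.wordProd m1 * cs.simple k :=
          simple_mul_wordProd_comm cs k m1 hcomm1
        have e2 : cs.simple k * cs.wordProd m2 = cs.wordProd m2 * cs.simple k :=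
          simple_mul_wordProd_comm cs k m2 hcomm2
        have e3 : cs.simple k * cs.simple j * cs.simple k =
            cs.simple j * cs.simple k * cs.simple j :=
          simple_braid_of_M_eq_three cs (An_eq_three hjk)
        have e1' : ∀ x : W, cs.simple k * (cs.wordProd m1 * x) =
            cs.wordProd m1 * (cs.simple k * x) := fun x => by
          rw [← mul_assoc, e1, mul_assoc]
        have e2' : ∀ x : W, cs.wordProd m2 * (cs.simple k * x) =
            cs.simple k * (cs.wordProd m2 * x) := fun x => by
          rw [← mul_assoc, ← e2, mul_assoc]
        have e3' : ∀ x : W, cs.simple k * (cs.simple j * (cs.simple k * x)) =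
            cs.simple j * (cs.simple k * (cs.simple j * x)) := fun x => by
          rw [← mul_assoc, ← mul_assoc, e3, mul_assoc, mul_assoc]
        rw [hω, hω', hm]
        simp only [cs.wordProd_append, cs.wordProd_cons, mul_assoc]
        rw [e1', e2', e3']
      have hlen' : ω'.length = ω.length := by
        rw [hω, hω', hm]; simp; omega
      have hred' : IsRedexOf cs ω' u := by
        constructor
        · rw [← hπ, hprod]
        · unfold CoxeterSystem.IsReduced
          rw [← hπ, hlen']
          exact hredu
      have hperm := commEquiv_perm (hu ω ω' ⟨hprod, hredu⟩ hred')
      have hcount := hperm.count_eq k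
      have hkm : k ∉ m := fun hk => by have := hlt k hk; omega
      have hjk' : j ≠ k := fun he => by rw [he] at hjk; omega
      have hkm1 : k ∉ m1 := fun hk => hkm (by rw [hm]; simp [hk])
      have hkm2 : k ∉ m2 := fun hk => hkm (by rw [hm]; simp [hk])
      rw [hω, hω'] at hcount
      simp [List.count_append, List.count_cons, List.count_eq_zero.2 hkm,
        List.count_eq_zero.2 hkm1, List.count_eq_zero.2 hkm2, hjk'] at hcount
  · -- all letters of m commute with k : not reduced
    push_neg at hex
    have hcomm : ∀ x ∈ m, cs.simple x * cs.simple k = cs.simple k * cs.simple x := by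
      intro x hx
      exact comm_simple_An cs (hlt x hx) (hex x hx)
    have hπ : cs.wordProd (l ++ k :: m ++ k :: r) = cs.wordProd (l ++ (m ++ r)) := by
      have e1 : cs.simple k * cs.wordProd m = cs.wordProd m * cs.simple k :=
        simple_mul_wordProd_comm cs k m hcomm
      have e1' : ∀ x : W, cs.simple k * (cs.wordProd m * x) =
          cs.wordProd m * (cs.simple k * x) := fun x => by
        rw [← mul_assoc, e1, mul_assoc]
      simp only [cs.wordProd_append, cs.wordProd_cons, mul_assoc]
      rw [e1', ← mul_assoc (cs.simple k), cs.simple_mul_simple_self, one_mul]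
    have hle := cs.length_wordProd_le (l ++ (m ++ r))
    rw [← hπ, hprod] at hle
    have : cs.length u = (l ++ k :: m ++ k :: r).length := by
      rw [← hprod]; exact hredu
    simp [List.length_append] at hle this
    omega

end An

open Fin.NatCast in
/-- If the generator σₙ (index `((n - 1 : ℕ) : Fin n)` of the type `Aₙ` Coxeter group) lies in the
support of a fully commutative element `u`, then it occurs exactly once in every reduced
expression of `u`. -/
theorem sigma_n_occurs_once (n : ℕ) [NeZero n] {W : Type*} [Group W]
    (cs : CoxeterSystem (CoxeterMatrix.Aₙ n) W) (u : W) (hu : IsFC cs u)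
    (hsupp : ∃ ω, IsRedexOf cs ω u ∧ ((n - 1 : ℕ) : Fin n) ∈ ω) :
    ∀ ω, IsRedexOf cs ω u → ω.count ((n - 1 : ℕ) : Fin n) = 1 := by
  intro ω hred
  set t : Fin n := ((n - 1 : ℕ) : Fin n) with ht
  have htv : (t : ℕ) = n - 1 := by
    rw [ht]; exact Fin.val_cast_of_lt (by have := NeZero.pos n; omega)
  obtain ⟨ω₀, h₀, ht₀⟩ := hsupp
  have hperm := commEquiv_perm (hu ω₀ ω h₀ hred)
  have h1 : 1 ≤ ω.count t := by
    rw [← hperm.count_eq t]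
    exact List.count_pos_iff.2 ht₀
  have h2 : ω.count t ≤ 1 := by
    by_contra hc
    push_neg at hc
    have htω : t ∈ ω := hperm.subset ht₀
    obtain ⟨l, a, rest, he, ha, hl⟩ := exists_split_first (fun x => x = t) ω ⟨t, htω, rfl⟩
    subst ha
    have hcl : l.count t = 0 := List.count_eq_zero.2 (fun h => hl t h rfl)
    have hrest : t ∈ rest := by
      rw [he] at hc
      simp [List.count_append, List.count_cons, hcl] at hc
      exact hc
    obtain ⟨m, b, r, he2, hb, hm⟩ := exists_split_first (fun x => x = t) rest ⟨t, hrest, rfl⟩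
    subst hb
    rw [he2] at he
    have hle : l ++ t :: m ++ t :: r = l ++ t :: (m ++ t :: r) := by simp
    refine no_bad_pair cs u hu m.length t l m r le_rfl (by rw [hle, ← he]; exact hred) ?_
    intro x hx
    have hxt : x ≠ t := fun h => hm x hx h
    have : (x : ℕ) ≠ n - 1 := fun h => hxt (Fin.ext (by rw [htv]; exact h))
    have := x.isLt
    omega
  omega
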